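/- arXiv:2105.11812 — 7 statements merged into one kernel-verified Lean document; each statement's English description precedes it below -/
import Mathlib

section
/- Let S be a nonempty finite type, A a nonempty finite type, 𝒫 : S × A → PMF S a transition kernel, c : S × A → ℝ a cost function, γ ∈ (0,1), and Ω : (A → ℝ) → ℝ a continuous function. For a stationary policy π : S → stdSimplex ℝ A define the regularised Bellman operator T_{π,Ω} : (S → ℝ) → (S → ℝ) by (T_{π,Ω} v)(s) = ∑_a (π s) a · (c(s,a) + γ ∑_{s'} 𝒫(s,a)(s') · v(s')) − Ω(π s), and the regularised Bellman optimality operator by (T_{*,Ω} v)(s) = inf over q ∈ stdSimplex ℝ A of [∑_a q a · (c(s,a) + γ ∑_{s'} 𝒫(s,a)(s') · v(s')) − Ω(q)]. Then: (i) each T_{π,Ω} has a unique fixed point v_{π,Ω}; (ii) T_{*,Ω} has a unique fixed point v_*; (iii) there exists a policy π* such that v_{π*,Ω} = v_* and for every policy π and every state s, v_*(s) ≤ v_{π,Ω}(s). -/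
open scoped BigOperators NNReal

/-- Regularised Bellman operator of a stationary policy `π`. -/
noncomputable def Treg {S A : Type*} [Fintype S] [Fintype A]
    (P : S × A → PMF S) (c : S × A → ℝ) (γ : ℝ) (Ω : (A → ℝ) → ℝ)
    (π : S → stdSimplex ℝ A) (v : S → ℝ) : S → ℝ :=
  fun s =>
    (∑ a, (π s : A → ℝ) a * (c (s, a) + γ * ∑ s', (P (s, a) s').toReal * v s')) - Ω (π s)

/-- Regularised Bellman optimality operator. -/
noncomputable def TregStar {S A : Type*} [Fintype S] [Fintype A]
    (P : S × A → PMF S) (c : S × A → ℝ) (γ : ℝ) (Ω : (A → ℝ) → ℝ)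
    (v : S → ℝ) : S → ℝ :=
  fun s => ⨅ q : stdSimplex ℝ A,
    ((∑ a, (q : A → ℝ) a * (c (s, a) + γ * ∑ s', (P (s, a) s').toReal * v s')) - Ω (q : A → ℝ))

section Aux

variable {S A : Type*} [Fintype S] [Fintype A]

lemma pmfSumToReal (P : PMF S) : ∑ s, (P s).toReal = 1 := by
  rw [← ENNReal.toReal_sum (fun s _ => P.apply_ne_top s)]
  rw [← tsum_fintype (L := SummationFilter.unconditional _), P.tsum_coe, ENNReal.toReal_one]

/-- The linear part of the Bellman operator, as a function of the action distribution. -/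
noncomputable def bell (P : S × A → PMF S) (c : S × A → ℝ) (γ : ℝ) (v : S → ℝ) (s : S)
    (q : A → ℝ) : ℝ :=
  ∑ a, q a * (c (s, a) + γ * ∑ s', (P (s, a) s').toReal * v s')

lemma bell_diff_le (P : S × A → PMF S) (c : S × A → ℝ) {γ : ℝ} (hγ0 : 0 ≤ γ)
    (q : stdSimplex ℝ A) (v w : S → ℝ) (s : S) {M : ℝ}
    (hM : ∀ s', v s' - w s' ≤ M) :
    bell P c γ v s q - bell P c γ w s q ≤ γ * M := by
  have hinner : ∀ a : A, ∑ s', (P (s, a) s').toReal * (v s' - w s') ≤ M := by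
    intro a
    calc ∑ s', (P (s, a) s').toReal * (v s' - w s')
        ≤ ∑ s', (P (s, a) s').toReal * M :=
          Finset.sum_le_sum fun s' _ =>
            mul_le_mul_of_nonneg_left (hM s') ENNReal.toReal_nonneg
      _ = M := by rw [← Finset.sum_mul, pmfSumToReal, one_mul]
  have h1 : bell P c γ v s q - bell P c γ w s q
      = ∑ a, (q : A → ℝ) a * (γ * ∑ s', (P (s, a) s').toReal * (v s' - w s')) := by
    rw [bell, bell, ← Finset.sum_sub_distrib]
    refine Finset.sum_congr rfl fun a _ => ?_
    have hs : (∑ s', (P (s, a) s').toReal * v s') - (∑ s', (P (s, a) s').toReal * w s')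
        = ∑ s', (P (s, a) s').toReal * (v s' - w s') := by
      rw [← Finset.sum_sub_distrib]
      exact Finset.sum_congr rfl fun s' _ => (mul_sub _ _ _).symm
    rw [← hs]; ring
  rw [h1]
  calc ∑ a, (q : A → ℝ) a * (γ * ∑ s', (P (s, a) s').toReal * (v s' - w s'))
      ≤ ∑ a, (q : A → ℝ) a * (γ * M) :=
        Finset.sum_le_sum fun a _ =>
          mul_le_mul_of_nonneg_left (mul_le_mul_of_nonneg_left (hinner a) hγ0) (q.2.1 a)
    _ = γ * M := by rw [← Finset.sum_mul, stdSimplex.sum_eq_one q, one_mul]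

lemma bell_cont (P : S × A → PMF S) (c : S × A → ℝ) (γ : ℝ) (Ω : (A → ℝ) → ℝ)
    (hΩ : Continuous Ω) (v : S → ℝ) (s : S) :
    Continuous fun q : A → ℝ => bell P c γ v s q - Ω q := by
  refine Continuous.sub ?_ hΩ
  exact continuous_finset_sum _ fun a _ => (continuous_apply a).mul continuous_const

lemma exists_min [Nonempty A] {g : (A → ℝ) → ℝ} (hg : Continuous g) :
    ∃ q : stdSimplex ℝ A, (∀ p : stdSimplex ℝ A, g q ≤ g p) ∧
      (⨅ p : stdSimplex ℝ A, g (p : A → ℝ)) = g q := by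
  classical
  haveI : Nonempty (stdSimplex ℝ A) :=
    ⟨⟨_, ite_eq_mem_stdSimplex ℝ (Classical.arbitrary A)⟩⟩
  obtain ⟨x, hx, hmin'⟩ := (isCompact_stdSimplex ℝ A).exists_isMinOn
    ⟨_, ite_eq_mem_stdSimplex ℝ (Classical.arbitrary A)⟩ hg.continuousOn
  have hmin : ∀ y ∈ stdSimplex ℝ A, g x ≤ g y := fun y hy => hmin' hy
  refine ⟨⟨x, hx⟩, ?_, le_antisymm ?_ ?_⟩
  · intro p
    exact hmin p.1 p.2
  · have hbdd : BddBelow (Set.range fun p : stdSimplex ℝ A => g (p : A → ℝ)) := by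
      refine ⟨g x, ?_⟩
      rintro y ⟨p, rfl⟩
      exact hmin p.1 p.2
    exact ciInf_le hbdd ⟨x, hx⟩
  · exact le_ciInf fun p => hmin p.1 p.2

lemma bdd_below_bell [Nonempty A] (P : S × A → PMF S) (c : S × A → ℝ) (γ : ℝ)
    (Ω : (A → ℝ) → ℝ) (hΩ : Continuous Ω) (v : S → ℝ) (s : S) :
    BddBelow (Set.range fun q : stdSimplex ℝ A => bell P c γ v s q - Ω q) := by
  obtain ⟨q0, hq0, -⟩ := exists_min (bell_cont P c γ Ω hΩ v s)
  exact ⟨bell P c γ v s q0 - Ω q0, by rintro y ⟨p, rfl⟩; exact hq0 p⟩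

lemma treg_apply (P : S × A → PMF S) (c : S × A → ℝ) (γ : ℝ) (Ω : (A → ℝ) → ℝ)
    (π : S → stdSimplex ℝ A) (v : S → ℝ) (s : S) :
    Treg P c γ Ω π v s = bell P c γ v s (π s) - Ω (π s) := rfl

lemma tregStar_apply (P : S × A → PMF S) (c : S × A → ℝ) (γ : ℝ) (Ω : (A → ℝ) → ℝ)
    (v : S → ℝ) (s : S) :
    TregStar P c γ Ω v s = ⨅ q : stdSimplex ℝ A, (bell P c γ v s q - Ω q) := rfl

lemma tregStar_le [Nonempty A] (P : S × A → PMF S) (c : S × A → ℝ) (γ : ℝ)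
    (Ω : (A → ℝ) → ℝ) (hΩ : Continuous Ω) (v : S → ℝ) (s : S) (q : stdSimplex ℝ A) :
    TregStar P c γ Ω v s ≤ bell P c γ v s q - Ω q := by
  rw [tregStar_apply]
  exact ciInf_le (bdd_below_bell P c γ Ω hΩ v s) q

lemma dist_pointwise {v w : S → ℝ} (s : S) : v s - w s ≤ dist v w :=
  le_trans (le_abs_self _) (by rw [← Real.dist_eq]; exact dist_le_pi_dist v w s)

lemma treg_lip (P : S × A → PMF S) (c : S × A → ℝ) {γ : ℝ} (hγ0 : 0 ≤ γ)
    (Ω : (A → ℝ) → ℝ) (π : S → stdSimplex ℝ A) :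
    LipschitzWith ⟨γ, hγ0⟩ (Treg P c γ Ω π) := by
  refine LipschitzWith.of_dist_le_mul fun v w => ?_
  rw [dist_pi_le_iff (by positivity)]
  intro s
  rw [Real.dist_eq, abs_sub_le_iff]
  have h1 : Treg P c γ Ω π v s - Treg P c γ Ω π w s
      = bell P c γ v s (π s) - bell P c γ w s (π s) := by
    rw [treg_apply, treg_apply]; ring
  have h2 : Treg P c γ Ω π w s - Treg P c γ Ω π v s
      = bell P c γ w s (π s) - bell P c γ v s (π s) := by
    rw [treg_apply, treg_apply]; ring
  constructor
  · rw [h1]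
    exact bell_diff_le P c hγ0 (π s) v w s fun s' => dist_pointwise s'
  · rw [h2]
    have := bell_diff_le P c hγ0 (π s) w v s (M := dist v w)
      fun s' => by rw [dist_comm]; exact dist_pointwise s'
    exact this

lemma tregStar_lip [Nonempty A] (P : S × A → PMF S) (c : S × A → ℝ) {γ : ℝ} (hγ0 : 0 ≤ γ)
    (Ω : (A → ℝ) → ℝ) (hΩ : Continuous Ω) :
    LipschitzWith ⟨γ, hγ0⟩ (TregStar P c γ Ω) := by
  refine LipschitzWith.of_dist_le_mul fun v w => ?_
  rw [dist_pi_le_iff (by positivity)]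
  intro s
  rw [Real.dist_eq, abs_sub_le_iff]
  have key : ∀ x y : S → ℝ, (∀ s', x s' - y s' ≤ dist v w) →
      TregStar P c γ Ω x s - TregStar P c γ Ω y s ≤ γ * dist v w := by
    intro x y hxy
    obtain ⟨qy, hqymin, hqy⟩ := exists_min (bell_cont P c γ Ω hΩ y s)
    have h1 : TregStar P c γ Ω y s = bell P c γ y s qy - Ω qy := by
      rw [tregStar_apply]; exact hqy
    have h2 : TregStar P c γ Ω x s ≤ bell P c γ x s qy - Ω qy :=
      tregStar_le P c γ Ω hΩ x s qy
    have h3 := bell_diff_le P c hγ0 qy x y s hxy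
    rw [h1]; linarith
  constructor
  · exact key v w fun s' => dist_pointwise s'
  · exact key w v fun s' => by rw [dist_comm]; exact dist_pointwise s'

end Aux

theorem stmt0 {S A : Type*} [Fintype S] [Fintype A] [Nonempty S] [Nonempty A]
    (P : S × A → PMF S) (c : S × A → ℝ) (γ : ℝ) (hγ : γ ∈ Set.Ioo (0 : ℝ) 1)
    (Ω : (A → ℝ) → ℝ) (hΩ : Continuous Ω) :
    -- (i) each regularised Bellman operator has a unique fixed point
    (∀ π : S → stdSimplex ℝ A, ∃! v : S → ℝ, Treg P c γ Ω π v = v) ∧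
    -- (ii) the regularised Bellman optimality operator has a unique fixed point
    (∃! v : S → ℝ, TregStar P c γ Ω v = v) ∧
    -- (iii) there is an optimal policy whose value function is the optimal one,
    -- dominating the value function of every policy
    (∀ vstar : S → ℝ, TregStar P c γ Ω vstar = vstar →
      ∃ πstar : S → stdSimplex ℝ A, Treg P c γ Ω πstar vstar = vstar ∧
        ∀ (π : S → stdSimplex ℝ A) (vπ : S → ℝ), Treg P c γ Ω π vπ = vπ →
          ∀ s, vstar s ≤ vπ s) := by
  obtain ⟨hγ0, hγ1⟩ := hγ
  have hγ0' : (0 : ℝ) ≤ γ := hγ0.le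
  have hKlt : (⟨γ, hγ0'⟩ : ℝ≥0) < 1 := by exact_mod_cast hγ1
  have hc1 : ∀ π : S → stdSimplex ℝ A,
      ContractingWith ⟨γ, hγ0'⟩ (Treg P c γ Ω π) :=
    fun π => ⟨hKlt, treg_lip P c hγ0' Ω π⟩
  have hc2 : ContractingWith ⟨γ, hγ0'⟩ (TregStar P c γ Ω) :=
    ⟨hKlt, tregStar_lip P c hγ0' Ω hΩ⟩
  refine ⟨fun π => ⟨_, (hc1 π).fixedPoint_isFixedPt, fun y hy => (hc1 π).fixedPoint_unique hy⟩,
    ⟨_, hc2.fixedPoint_isFixedPt, fun y hy => hc2.fixedPoint_unique hy⟩, ?_⟩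
  intro vstar hvstar
  -- choose a minimizing action distribution for each state
  choose πstar hmin hval using fun s =>
    exists_min (A := A) (bell_cont P c γ Ω hΩ vstar s)
  have hpt : Treg P c γ Ω πstar vstar = vstar := by
    funext s
    rw [treg_apply, ← (hval s), ← tregStar_apply]
    exact congrFun hvstar s
  refine ⟨πstar, hpt, ?_⟩
  intro π vπ hvπ
  set M : ℝ := Finset.univ.sup' Finset.univ_nonempty (fun s => vstar s - vπ s) with hM
  have hMle : ∀ s, vstar s - vπ s ≤ M := fun s =>
    Finset.le_sup' (fun s => vstar s - vπ s) (Finset.mem_univ s)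
  have hstep : ∀ s, vstar s - vπ s ≤ γ * M := by
    intro s
    have h1 : vstar s = TregStar P c γ Ω vstar s := (congrFun hvstar s).symm
    have h2 : vπ s = Treg P c γ Ω π vπ s := (congrFun hvπ s).symm
    have h3 : TregStar P c γ Ω vstar s ≤ bell P c γ vstar s (π s) - Ω (π s) :=
      tregStar_le P c γ Ω hΩ vstar s (π s)
    have h4 : Treg P c γ Ω π vπ s = bell P c γ vπ s (π s) - Ω (π s) := treg_apply ..
    have h5 := bell_diff_le P c hγ0' (π s) vstar vπ s hMle
    rw [h1, h2, h4]; linarith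
  have hMγ : M ≤ γ * M := Finset.sup'_le _ _ fun s _ => hstep s
  have hM0 : M ≤ 0 := by nlinarith
  intro s
  have := hMle s
  linarith
end

section
/- Let S, A be nonempty finite types, 𝒫 : S × A → PMF S, c : S × A → ℝ, γ ∈ (0,1), and Ω : (A → ℝ) → ℝ a continuous function. With T_{π,Ω} and T_{*,Ω} the regularised Bellman operator of a policy π and the regularised Bellman optimality operator (defined by (T_{π,Ω} v)(s) = ∑_a (π s) a · (c(s,a) + γ ∑_{s'} 𝒫(s,a)(s') v(s')) − Ω(π s) and (T_{*,Ω} v)(s) = inf_{q ∈ stdSimplex ℝ A} [∑_a q a · (c(s,a) + γ ∑_{s'} 𝒫(s,a)(s') v(s')) − Ω(q)]), both operators are γ-contractions in the sup norm: for all v, w : S → ℝ, sup_s |(T_{π,Ω} v)(s) − (T_{π,Ω} w)(s)| ≤ γ · sup_s |v(s) − w(s)|, and sup_s |(T_{*,Ω} v)(s) − (T_{*,Ω} w)(s)| ≤ γ · sup_s |v(s) − w(s)|. -/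
open scoped BigOperators

lemma pmf_sum_toReal {S : Type*} [Fintype S] (p : PMF S) :
    ∑ s, (p s).toReal = 1 := by
  have h := p.tsum_coe
  rw [tsum_fintype] at h
  have : (∑ s, (p s)).toReal = 1 := by rw [h]; simp
  rw [ENNReal.toReal_sum] at this
  · exact this
  · intro s _
    exact (p.apply_lt_top s).ne

lemma key_bound {S A : Type*} [Fintype S] [Fintype A] [Nonempty S]
    (P : S × A → PMF S) (c : S × A → ℝ) (γ : ℝ) (hγ : γ ∈ Set.Ioo (0 : ℝ) 1)
    (v w : S → ℝ) (q : A → ℝ) (hq : q ∈ stdSimplex ℝ A) (s : S) :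
    |(∑ a, q a * (c (s, a) + γ * ∑ s', (P (s, a) s').toReal * v s'))
      - ∑ a, q a * (c (s, a) + γ * ∑ s', (P (s, a) s').toReal * w s')|
      ≤ γ * ⨆ s, |v s - w s| := by
  set M : ℝ := ⨆ s, |v s - w s| with hM
  have hbdd : BddAbove (Set.range fun s => |v s - w s|) := Set.Finite.bddAbove (Set.finite_range _)
  have hMle : ∀ s', |v s' - w s'| ≤ M := fun s' => le_ciSup hbdd s'
  have hM0 : 0 ≤ M := le_trans (abs_nonneg _) (hMle (Classical.arbitrary S))
  have inner : ∀ a : A, |(∑ s', (P (s, a) s').toReal * v s') - ∑ s', (P (s, a) s').toReal * w s'| ≤ M := by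
    intro a
    rw [← Finset.sum_sub_distrib]
    calc |∑ s', ((P (s, a) s').toReal * v s' - (P (s, a) s').toReal * w s')|
        ≤ ∑ s', |(P (s, a) s').toReal * v s' - (P (s, a) s').toReal * w s'| :=
          Finset.abs_sum_le_sum_abs _ _
      _ ≤ ∑ s', (P (s, a) s').toReal * M := by
          apply Finset.sum_le_sum
          intro s' _
          rw [← mul_sub, abs_mul, abs_of_nonneg ENNReal.toReal_nonneg]
          exact mul_le_mul_of_nonneg_left (hMle s') ENNReal.toReal_nonneg
      _ = M := by rw [← Finset.sum_mul, pmf_sum_toReal, one_mul]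
  rw [← Finset.sum_sub_distrib]
  calc |∑ a, (q a * (c (s, a) + γ * ∑ s', (P (s, a) s').toReal * v s')
          - q a * (c (s, a) + γ * ∑ s', (P (s, a) s').toReal * w s'))|
      ≤ ∑ a, |q a * (c (s, a) + γ * ∑ s', (P (s, a) s').toReal * v s')
          - q a * (c (s, a) + γ * ∑ s', (P (s, a) s').toReal * w s')| :=
        Finset.abs_sum_le_sum_abs _ _
    _ ≤ ∑ a, q a * (γ * M) := by
        apply Finset.sum_le_sum
        intro a _
        rw [← mul_sub, abs_mul, abs_of_nonneg (hq.1 a)]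
        apply mul_le_mul_of_nonneg_left _ (hq.1 a)
        have : (c (s, a) + γ * ∑ s', (P (s, a) s').toReal * v s')
            - (c (s, a) + γ * ∑ s', (P (s, a) s').toReal * w s')
            = γ * ((∑ s', (P (s, a) s').toReal * v s') - ∑ s', (P (s, a) s').toReal * w s') := by ring
        rw [this, abs_mul, abs_of_pos hγ.1]
        exact mul_le_mul_of_nonneg_left (inner a) (le_of_lt hγ.1)
    _ = γ * M := by rw [← Finset.sum_mul, hq.2, one_mul]

theorem stmt1 {S A : Type*} [Fintype S] [Fintype A] [Nonempty S] [Nonempty A]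
    (P : S × A → PMF S) (c : S × A → ℝ) (γ : ℝ) (hγ : γ ∈ Set.Ioo (0 : ℝ) 1)
    (Ω : (A → ℝ) → ℝ) (hΩ : Continuous Ω) :
    -- the regularised Bellman operator of any policy is a `γ`-contraction in sup norm
    (∀ (π : S → stdSimplex ℝ A) (v w : S → ℝ),
      (⨆ s, |Treg P c γ Ω π v s - Treg P c γ Ω π w s|) ≤ γ * ⨆ s, |v s - w s|) ∧
    -- and so is the regularised Bellman optimality operator
    (∀ v w : S → ℝ,
      (⨆ s, |TregStar P c γ Ω v s - TregStar P c γ Ω w s|) ≤ γ * ⨆ s, |v s - w s|) := by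
  haveI : CompactSpace (stdSimplex ℝ A) := isCompact_iff_compactSpace.mp (isCompact_stdSimplex ℝ A)
  haveI : Nonempty (stdSimplex ℝ A) := by
    refine ⟨⟨fun _ => (Fintype.card A : ℝ)⁻¹, fun a => by positivity, ?_⟩⟩
    rw [Finset.sum_const, nsmul_eq_mul, Finset.card_univ]
    field_simp
  constructor
  · intro π v w
    apply ciSup_le
    intro s
    have : Treg P c γ Ω π v s - Treg P c γ Ω π w s
        = (∑ a, (π s : A → ℝ) a * (c (s, a) + γ * ∑ s', (P (s, a) s').toReal * v s'))
          - ∑ a, (π s : A → ℝ) a * (c (s, a) + γ * ∑ s', (P (s, a) s').toReal * w s') := by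
      simp [Treg]
    rw [this]
    exact key_bound P c γ hγ v w _ (π s).2 s
  · intro v w
    apply ciSup_le
    intro s
    set fv : stdSimplex ℝ A → ℝ := fun q =>
      (∑ a, (q : A → ℝ) a * (c (s, a) + γ * ∑ s', (P (s, a) s').toReal * v s')) - Ω (q : A → ℝ)
    set fw : stdSimplex ℝ A → ℝ := fun q =>
      (∑ a, (q : A → ℝ) a * (c (s, a) + γ * ∑ s', (P (s, a) s').toReal * w s')) - Ω (q : A → ℝ)
    have hfvc : Continuous fv := by
      apply Continuous.sub
      · exact continuous_finset_sum _ fun a _ =>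
          ((continuous_apply a).comp continuous_subtype_val).mul continuous_const
      · exact hΩ.comp continuous_subtype_val
    have hfwc : Continuous fw := by
      apply Continuous.sub
      · exact continuous_finset_sum _ fun a _ =>
          ((continuous_apply a).comp continuous_subtype_val).mul continuous_const
      · exact hΩ.comp continuous_subtype_val
    have hbv : BddBelow (Set.range fv) := (isCompact_range hfvc).bddBelow
    have hbw : BddBelow (Set.range fw) := (isCompact_range hfwc).bddBelow
    have hdiff : ∀ q : stdSimplex ℝ A, |fv q - fw q| ≤ γ * ⨆ s, |v s - w s| := by
      intro q
      have : fv q - fw q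
          = (∑ a, (q : A → ℝ) a * (c (s, a) + γ * ∑ s', (P (s, a) s').toReal * v s'))
            - ∑ a, (q : A → ℝ) a * (c (s, a) + γ * ∑ s', (P (s, a) s').toReal * w s') := by
        simp [fv, fw]
      rw [this]
      exact key_bound P c γ hγ v w _ q.2 s
    have h1 : TregStar P c γ Ω v s ≤ TregStar P c γ Ω w s + γ * ⨆ s, |v s - w s| := by
      have : TregStar P c γ Ω v s = ⨅ q, fv q := rfl
      rw [this]
      have hw : TregStar P c γ Ω w s + γ * ⨆ s, |v s - w s| = ⨅ q, (fw q + γ * ⨆ s, |v s - w s|) := by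
        have e : TregStar P c γ Ω w s = ⨅ q, fw q := rfl
        rw [e, ciInf_add hbw]
      rw [hw]
      apply ciInf_mono hbv
      intro q
      have := (abs_le.mp (hdiff q)).2
      linarith
    have h2 : TregStar P c γ Ω w s ≤ TregStar P c γ Ω v s + γ * ⨆ s, |v s - w s| := by
      have : TregStar P c γ Ω w s = ⨅ q, fw q := rfl
      rw [this]
      have hv : TregStar P c γ Ω v s + γ * ⨆ s, |v s - w s| = ⨅ q, (fv q + γ * ⨆ s, |v s - w s|) := by
        have e : TregStar P c γ Ω v s = ⨅ q, fv q := rfl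
        rw [e, ciInf_add hbv]
      rw [hv]
      apply ciInf_mono hbw
      intro q
      have := (abs_le.mp (hdiff q)).1
      linarith
    rw [abs_le]
    constructor <;> linarith
end

section
/- (Flow equations for the double-discounted occupancy measure μ_π.) In the finite MDP setting with weights η : ℕ → ℝ, η(k) ≥ 0, ∑_k η(k) = 1, for every policy π and all s₀, s, a: μ_π((s,a)|s₀) = π s a · ( ∑_{a'} P^η_π((s,a')|s₀) + γ · ∑_{(s',a')} μ_π((s',a')|s₀) · 𝒫(s',a')(s) ). If moreover η(k) = (1−γ_η)·γ_η^k for some γ_η ∈ (0,1), then also μ_π((s,a)|s₀) = π s a · ( (1−γ_η) · ∑_{a'} ρ_π((s,a')|s₀) + γ_η · ∑_{(s',a')} μ_π((s',a')|s₀) · 𝒫(s',a')(s) ). -/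
open scoped BigOperators Classical

/-- `n`-step state–action distribution of the stationary policy `π` started at a state. -/
noncomputable def PstepS {S A : Type*} [Fintype S] [Fintype A]
    (P : S × A → PMF S) (π : S → PMF A) : ℕ → S → S × A → ℝ
  | 0, s₀, x => if x.1 = s₀ then (π x.1 x.2).toReal else 0
  | n + 1, s₀, x => ∑ y : S × A, PstepS P π n s₀ y * (P y x.1).toReal * (π x.1 x.2).toReal

/-- `n`-step state–action distribution of `π` started at a state–action pair. -/
noncomputable def PstepSA {S A : Type*} [Fintype S] [Fintype A]
    (P : S × A → PMF S) (π : S → PMF A) : ℕ → S × A → S × A → ℝ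
  | 0, y, x => if x = y then 1 else 0
  | n + 1, y, x => ∑ z : S × A, PstepSA P π n y z * (P z x.1).toReal * (π x.1 x.2).toReal

/-- η-weighted future state distribution, started at a state. -/
noncomputable def PetaS {S A : Type*} [Fintype S] [Fintype A]
    (P : S × A → PMF S) (π : S → PMF A) (η : ℕ → ℝ) (s₀ : S) (x : S × A) : ℝ :=
  ∑' k, η k * PstepS P π k s₀ x

/-- η-weighted future state distribution, started at a state–action pair. -/
noncomputable def PetaSA {S A : Type*} [Fintype S] [Fintype A]
    (P : S × A → PMF S) (π : S → PMF A) (η : ℕ → ℝ) (y : S × A) (x : S × A) : ℝ :=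
  ∑' k, η k * PstepSA P π k y x

/-- γ-discounted occupancy measure, started at a state. -/
noncomputable def rhoS {S A : Type*} [Fintype S] [Fintype A]
    (P : S × A → PMF S) (π : S → PMF A) (γ : ℝ) (s₀ : S) (x : S × A) : ℝ :=
  ∑' t, γ ^ t * PstepS P π t s₀ x

/-- γ-discounted occupancy measure, started at a state–action pair. -/
noncomputable def rhoSA {S A : Type*} [Fintype S] [Fintype A]
    (P : S × A → PMF S) (π : S → PMF A) (γ : ℝ) (y : S × A) (x : S × A) : ℝ :=
  ∑' t, γ ^ t * PstepSA P π t y x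

/-- η-weighted, γ-discounted future occupancy measure `μ_π`. -/
noncomputable def muS {S A : Type*} [Fintype S] [Fintype A]
    (P : S × A → PMF S) (π : S → PMF A) (γ : ℝ) (η : ℕ → ℝ) (s₀ : S) (x : S × A) : ℝ :=
  ∑' t, ∑' k, γ ^ t * η k * PstepS P π (t + k) s₀ x

section auxlemmas
variable {S A : Type*} [Fintype S] [Fintype A]

lemma aux_pmf_sum_toReal {α : Type*} [Fintype α] (p : PMF α) :
    ∑ a : α, (p a).toReal = 1 := by
  have h := p.tsum_coe
  rw [tsum_fintype] at h
  rw [← ENNReal.toReal_sum fun a _ => p.apply_ne_top a, h, ENNReal.toReal_one]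

lemma aux_pmf_toReal_le_one {α : Type*} (p : PMF α) (a : α) : (p a).toReal ≤ 1 := by
  have := ENNReal.toReal_mono ENNReal.one_ne_top (p.coe_le_one a)
  simpa using this

lemma aux_pstep_nonneg (P : S × A → PMF S) (π : S → PMF A) (n : ℕ) (s₀ : S) (x : S × A) :
    0 ≤ PstepS P π n s₀ x := by
  induction n generalizing x with
  | zero =>
    simp only [PstepS]
    split
    · exact ENNReal.toReal_nonneg
    · exact le_refl 0
  | succ n ih =>
    simp only [PstepS]
    exact Finset.sum_nonneg fun y _ =>
      mul_nonneg (mul_nonneg (ih y) ENNReal.toReal_nonneg) ENNReal.toReal_nonneg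

lemma aux_pstep_sum_one (P : S × A → PMF S) (π : S → PMF A) (n : ℕ) (s₀ : S) :
    ∑ x : S × A, PstepS P π n s₀ x = 1 := by
  induction n with
  | zero =>
    rw [Fintype.sum_prod_type]
    have h : ∀ s : S, ∑ a : A, PstepS P π 0 s₀ (s, a) = if s = s₀ then 1 else 0 := by
      intro s
      simp only [PstepS]
      split <;> simp [aux_pmf_sum_toReal]
    simp [h]
  | succ n ih =>
    rw [Fintype.sum_prod_type]
    have h : ∀ s : S, ∑ a : A, PstepS P π (n+1) s₀ (s, a)
        = ∑ y : S × A, PstepS P π n s₀ y * (P y s).toReal := by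
      intro s
      simp only [PstepS]
      rw [Finset.sum_comm]
      refine Finset.sum_congr rfl fun y _ => ?_
      rw [← Finset.mul_sum, aux_pmf_sum_toReal, mul_one]
    simp only [h]
    rw [Finset.sum_comm]
    calc ∑ y : S × A, ∑ s : S, PstepS P π n s₀ y * (P y s).toReal
        = ∑ y : S × A, PstepS P π n s₀ y := by
          refine Finset.sum_congr rfl fun y _ => ?_
          rw [← Finset.mul_sum, aux_pmf_sum_toReal, mul_one]
      _ = 1 := ih

lemma aux_pstep_le_one (P : S × A → PMF S) (π : S → PMF A) (n : ℕ) (s₀ : S) (x : S × A) :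
    PstepS P π n s₀ x ≤ 1 := by
  calc PstepS P π n s₀ x ≤ ∑ y : S × A, PstepS P π n s₀ y :=
        Finset.single_le_sum (fun y _ => aux_pstep_nonneg P π n s₀ y) (Finset.mem_univ x)
    _ = 1 := aux_pstep_sum_one P π n s₀

lemma aux_pstep_succ (P : S × A → PMF S) (π : S → PMF A) (n : ℕ) (s₀ s : S) (a : A) :
    PstepS P π (n+1) s₀ (s, a)
      = (π s a).toReal * ∑ y : S × A, PstepS P π n s₀ y * (P y s).toReal := by
  simp only [PstepS]
  rw [← Finset.sum_mul, mul_comm]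

lemma aux_pstep_fac (P : S × A → PMF S) (π : S → PMF A) (n : ℕ) (s₀ s : S) (a : A) :
    PstepS P π n s₀ (s, a) = (π s a).toReal * ∑ a' : A, PstepS P π n s₀ (s, a') := by
  cases n with
  | zero =>
    simp only [PstepS]
    split <;> simp [aux_pmf_sum_toReal]
  | succ n =>
    simp only [PstepS]
    rw [← Finset.sum_mul, mul_comm]
    congr 1
    rw [Finset.sum_comm]
    refine Finset.sum_congr rfl fun y _ => ?_
    rw [← Finset.mul_sum, aux_pmf_sum_toReal, mul_one]

end auxlemmas

section s2
variable {S A : Type*} [Fintype S] [Fintype A]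
variable (P : S × A → PMF S) (π : S → PMF A)

set_option linter.unusedSectionVars false

lemma aux_summable_eta {η : ℕ → ℝ} (hη1 : ∑' k, η k = 1) : Summable η := by
  by_contra h
  rw [tsum_eq_zero_of_not_summable h] at hη1
  norm_num at hη1

lemma aux_summable_eta_mul {η : ℕ → ℝ} (hη0 : ∀ k, 0 ≤ η k) (hη : Summable η)
    {c : ℕ → ℝ} (h0 : ∀ k, 0 ≤ c k) (h1 : ∀ k, c k ≤ 1) :
    Summable (fun k => η k * c k) := by
  refine Summable.of_nonneg_of_le (fun k => mul_nonneg (hη0 k) (h0 k)) (fun k => ?_) hη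
  calc η k * c k ≤ η k * 1 := mul_le_mul_of_nonneg_left (h1 k) (hη0 k)
    _ = η k := mul_one _

lemma aux_summable_geom {γ : ℝ} (hγ : γ ∈ Set.Ioo (0:ℝ) 1) {c : ℕ → ℝ} {C : ℝ}
    (h0 : ∀ t, 0 ≤ c t) (h1 : ∀ t, c t ≤ C) :
    Summable (fun t => γ ^ t * c t) := by
  refine Summable.of_nonneg_of_le (fun t => mul_nonneg (pow_nonneg hγ.1.le t) (h0 t))
    (fun t => ?_) ((summable_geometric_of_lt_one hγ.1.le hγ.2).mul_left C)
  calc γ ^ t * c t ≤ γ ^ t * C := mul_le_mul_of_nonneg_left (h1 t) (pow_nonneg hγ.1.le t)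
    _ = C * γ ^ t := mul_comm _ _



variable {γ : ℝ} (hγ : γ ∈ Set.Ioo (0:ℝ) 1)
variable {η : ℕ → ℝ} (hη0 : ∀ k, 0 ≤ η k) (hη1 : ∑' k, η k = 1)
variable (s₀ : S)
include hγ hη0 hη1

-- summability of the η-weighted sums, for an arbitrary index map f
lemma aux_hGsum (f : ℕ → ℕ) (x : S × A) :
    Summable (fun k => η k * PstepS P π (f k) s₀ x) :=
  aux_summable_eta_mul hη0 (aux_summable_eta hη1)
    (fun k => aux_pstep_nonneg P π (f k) s₀ x) (fun k => aux_pstep_le_one P π (f k) s₀ x)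

lemma aux_hGnn (f : ℕ → ℕ) (x : S × A) :
    0 ≤ ∑' k, η k * PstepS P π (f k) s₀ x :=
  tsum_nonneg fun k => mul_nonneg (hη0 k) (aux_pstep_nonneg P π (f k) s₀ x)

lemma aux_hGle (f : ℕ → ℕ) (x : S × A) :
    (∑' k, η k * PstepS P π (f k) s₀ x) ≤ 1 := by
  calc (∑' k, η k * PstepS P π (f k) s₀ x) ≤ ∑' k, η k := by
        refine Summable.tsum_le_tsum (fun k => ?_) (aux_hGsum P π hγ hη0 hη1 s₀ f x) (aux_summable_eta hη1)
        calc η k * PstepS P π (f k) s₀ x ≤ η k * 1 :=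
              mul_le_mul_of_nonneg_left (aux_pstep_le_one P π (f k) s₀ x) (hη0 k)
          _ = η k := mul_one _
    _ = 1 := hη1

lemma aux_hmu (x : S × A) :
    muS P π γ η s₀ x = ∑' t, γ ^ t * ∑' k, η k * PstepS P π (t + k) s₀ x := by
  unfold muS
  refine tsum_congr fun t => ?_
  simp only [mul_assoc]
  exact tsum_mul_left

lemma aux_G_succ (t : ℕ) (s : S) (a : A) :
    (∑' k, η k * PstepS P π (t + 1 + k) s₀ (s, a))
      = (π s a).toReal *
          ∑ y : S × A, (∑' k, η k * PstepS P π (t + k) s₀ y) * (P y s).toReal := by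
  have hQ : ∀ k, PstepS P π (t + 1 + k) s₀ (s, a)
      = (π s a).toReal * ∑ y : S × A, PstepS P π (t + k) s₀ y * (P y s).toReal := by
    intro k
    have h := aux_pstep_succ P π (t + k) s₀ s a
    rwa [show t + k + 1 = t + 1 + k by omega] at h
  calc (∑' k, η k * PstepS P π (t + 1 + k) s₀ (s, a))
      = ∑' k, (π s a).toReal *
          ∑ y : S × A, η k * (PstepS P π (t + k) s₀ y * (P y s).toReal) := by
        refine tsum_congr fun k => ?_
        rw [hQ k]
        simp only [Finset.mul_sum]
        exact Finset.sum_congr rfl fun y _ => by ring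
    _ = (π s a).toReal * ∑' k,
          ∑ y : S × A, η k * (PstepS P π (t + k) s₀ y * (P y s).toReal) := by
        exact tsum_mul_left
    _ = (π s a).toReal *
          ∑ y : S × A, ∑' k, η k * (PstepS P π (t + k) s₀ y * (P y s).toReal) := by
        congr 1
        refine Summable.tsum_finsetSum fun y _ => ?_
        refine aux_summable_eta_mul hη0 (aux_summable_eta hη1)
          (fun k => mul_nonneg (aux_pstep_nonneg P π (t + k) s₀ y) ENNReal.toReal_nonneg)
          (fun k => ?_)
        calc PstepS P π (t + k) s₀ y * (P y s).toReal
            ≤ 1 * 1 := mul_le_mul (aux_pstep_le_one P π (t + k) s₀ y)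
                (aux_pmf_toReal_le_one (P y) s) ENNReal.toReal_nonneg zero_le_one
          _ = 1 := one_mul 1
    _ = (π s a).toReal *
          ∑ y : S × A, (∑' k, η k * PstepS P π (t + k) s₀ y) * (P y s).toReal := by
        congr 1
        refine Finset.sum_congr rfl fun y _ => ?_
        rw [← tsum_mul_right]
        refine tsum_congr fun k => ?_
        ring

lemma aux_tail (s : S) (a : A) :
    (∑' t, γ ^ t * ∑' k, η k * PstepS P π (t + 1 + k) s₀ (s, a))
      = (π s a).toReal * ∑ y : S × A, muS P π γ η s₀ y * (P y s).toReal := by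
  calc (∑' t, γ ^ t * ∑' k, η k * PstepS P π (t + 1 + k) s₀ (s, a))
      = ∑' t, (π s a).toReal *
          ∑ y : S × A, γ ^ t * ((∑' k, η k * PstepS P π (t + k) s₀ y) * (P y s).toReal) := by
        refine tsum_congr fun t => ?_
        rw [aux_G_succ P π hγ hη0 hη1 s₀ t s a]
        simp only [Finset.mul_sum]
        exact Finset.sum_congr rfl fun y _ => by ring
    _ = (π s a).toReal * ∑' t,
          ∑ y : S × A, γ ^ t * ((∑' k, η k * PstepS P π (t + k) s₀ y) * (P y s).toReal) :=
        tsum_mul_left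
    _ = (π s a).toReal * ∑ y : S × A,
          ∑' t, γ ^ t * ((∑' k, η k * PstepS P π (t + k) s₀ y) * (P y s).toReal) := by
        congr 1
        refine Summable.tsum_finsetSum fun y _ => ?_
        refine aux_summable_geom hγ (C := 1) (fun t => mul_nonneg
          (aux_hGnn P π hγ hη0 hη1 s₀ (t + ·) y) ENNReal.toReal_nonneg) (fun t => ?_)
        calc (∑' k, η k * PstepS P π (t + k) s₀ y) * (P y s).toReal
            ≤ 1 * 1 := mul_le_mul (aux_hGle P π hγ hη0 hη1 s₀ (t + ·) y)
                (aux_pmf_toReal_le_one (P y) s) ENNReal.toReal_nonneg zero_le_one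
          _ = 1 := one_mul 1
    _ = (π s a).toReal * ∑ y : S × A, muS P π γ η s₀ y * (P y s).toReal := by
        congr 1
        refine Finset.sum_congr rfl fun y _ => ?_
        rw [aux_hmu P π hγ hη0 hη1 s₀ y, ← tsum_mul_right]
        refine tsum_congr fun t => ?_
        ring
end s2

section s3
variable {S A : Type*} [Fintype S] [Fintype A]
variable (P : S × A → PMF S) (π : S → PMF A)
variable {γ : ℝ} (hγ : γ ∈ Set.Ioo (0:ℝ) 1)
variable {η : ℕ → ℝ} (hη0 : ∀ k, 0 ≤ η k) (hη1 : ∑' k, η k = 1)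
variable (s₀ : S)
include hγ hη0 hη1

set_option linter.unusedSectionVars false

lemma aux_flow1 (s : S) (a : A) :
    muS P π γ η s₀ (s, a) = PetaS P π η s₀ (s, a)
      + γ * ((π s a).toReal * ∑ y : S × A, muS P π γ η s₀ y * (P y s).toReal) := by
  rw [aux_hmu P π hγ hη0 hη1 s₀ (s, a)]
  have hsum : Summable (fun t => γ ^ t * ∑' k, η k * PstepS P π (t + k) s₀ (s, a)) :=
    aux_summable_geom hγ (C := 1) (fun t => aux_hGnn P π hγ hη0 hη1 s₀ (t + ·) (s, a))
      (fun t => aux_hGle P π hγ hη0 hη1 s₀ (t + ·) (s, a))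
  rw [Summable.tsum_eq_zero_add hsum]
  congr 1
  · rw [pow_zero, one_mul]
    exact tsum_congr fun k => by rw [zero_add]
  · rw [← aux_tail P π hγ hη0 hη1 s₀ s a, ← tsum_mul_left]
    refine tsum_congr fun t => ?_
    rw [pow_succ]
    ring

lemma aux_peta_fac (s : S) (a : A) :
    PetaS P π η s₀ (s, a) = (π s a).toReal * ∑ a' : A, PetaS P π η s₀ (s, a') := by
  unfold PetaS
  calc (∑' k, η k * PstepS P π k s₀ (s, a))
      = ∑' k, ∑ a' : A, (π s a).toReal * (η k * PstepS P π k s₀ (s, a')) := by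
        refine tsum_congr fun k => ?_
        rw [aux_pstep_fac P π k s₀ s a]
        simp only [Finset.mul_sum]
        exact Finset.sum_congr rfl fun a' _ => by ring
    _ = ∑ a' : A, ∑' k, (π s a).toReal * (η k * PstepS P π k s₀ (s, a')) := by
        refine Summable.tsum_finsetSum fun a' _ => ?_
        exact ((aux_hGsum P π hγ hη0 hη1 s₀ id (s, a')).mul_left _)
    _ = (π s a).toReal * ∑ a' : A, ∑' k, η k * PstepS P π k s₀ (s, a') := by
        rw [Finset.mul_sum]
        exact Finset.sum_congr rfl fun a' _ => tsum_mul_left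

lemma aux_rho_fac (s : S) (a : A) :
    rhoS P π γ s₀ (s, a) = (π s a).toReal * ∑ a' : A, rhoS P π γ s₀ (s, a') := by
  unfold rhoS
  calc (∑' t, γ ^ t * PstepS P π t s₀ (s, a))
      = ∑' t, ∑ a' : A, (π s a).toReal * (γ ^ t * PstepS P π t s₀ (s, a')) := by
        refine tsum_congr fun t => ?_
        rw [aux_pstep_fac P π t s₀ s a]
        simp only [Finset.mul_sum]
        exact Finset.sum_congr rfl fun a' _ => by ring
    _ = ∑ a' : A, ∑' t, (π s a).toReal * (γ ^ t * PstepS P π t s₀ (s, a')) := by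
        refine Summable.tsum_finsetSum fun a' _ => ?_
        exact (aux_summable_geom hγ (C := 1)
          (fun t => aux_pstep_nonneg P π t s₀ (s, a'))
          (fun t => aux_pstep_le_one P π t s₀ (s, a'))).mul_left _
    _ = (π s a).toReal * ∑ a' : A, ∑' t, γ ^ t * PstepS P π t s₀ (s, a') := by
        rw [Finset.mul_sum]
        exact Finset.sum_congr rfl fun a' _ => tsum_mul_left

lemma aux_flow2 {γη : ℝ} (hγη : γη ∈ Set.Ioo (0:ℝ) 1) (hgeo : ∀ k, η k = (1 - γη) * γη ^ k)
    (s : S) (a : A) :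
    muS P π γ η s₀ (s, a) = (1 - γη) * rhoS P π γ s₀ (s, a)
      + γη * ((π s a).toReal * ∑ y : S × A, muS P π γ η s₀ y * (P y s).toReal) := by
  rw [aux_hmu P π hγ hη0 hη1 s₀ (s, a)]
  have key : ∀ t, (∑' k, η k * PstepS P π (t + k) s₀ (s, a))
      = (1 - γη) * PstepS P π t s₀ (s, a)
        + γη * ∑' k, η k * PstepS P π (t + 1 + k) s₀ (s, a) := by
    intro t
    rw [Summable.tsum_eq_zero_add (aux_hGsum P π hγ hη0 hη1 s₀ (t + ·) (s, a))]
    congr 1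
    · show η 0 * PstepS P π (t + 0) s₀ (s, a) = _
      rw [hgeo 0, pow_zero, mul_one, Nat.add_zero]
    · rw [← tsum_mul_left]
      refine tsum_congr fun k => ?_
      show η (k + 1) * PstepS P π (t + (k + 1)) s₀ (s, a) = _
      rw [hgeo (k + 1), hgeo k, show t + (k + 1) = t + 1 + k by omega]
      ring
  have h1 : Summable (fun t => γ ^ t * PstepS P π t s₀ (s, a)) :=
    aux_summable_geom hγ (C := 1) (fun t => aux_pstep_nonneg P π t s₀ (s, a))
      (fun t => aux_pstep_le_one P π t s₀ (s, a))
  have h2 : Summable (fun t => γ ^ t * ∑' k, η k * PstepS P π (t + 1 + k) s₀ (s, a)) :=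
    aux_summable_geom hγ (C := 1) (fun t => aux_hGnn P π hγ hη0 hη1 s₀ (t + 1 + ·) (s, a))
      (fun t => aux_hGle P π hγ hη0 hη1 s₀ (t + 1 + ·) (s, a))
  calc (∑' t, γ ^ t * ∑' k, η k * PstepS P π (t + k) s₀ (s, a))
      = ∑' t, ((1 - γη) * (γ ^ t * PstepS P π t s₀ (s, a))
          + γη * (γ ^ t * ∑' k, η k * PstepS P π (t + 1 + k) s₀ (s, a))) := by
        refine tsum_congr fun t => ?_
        rw [key t]
        ring
    _ = (1 - γη) * (∑' t, γ ^ t * PstepS P π t s₀ (s, a))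
          + γη * ∑' t, γ ^ t * ∑' k, η k * PstepS P π (t + 1 + k) s₀ (s, a) := by
        rw [Summable.tsum_add (h1.mul_left _) (h2.mul_left _), tsum_mul_left, tsum_mul_left]
    _ = (1 - γη) * rhoS P π γ s₀ (s, a)
          + γη * ((π s a).toReal * ∑ y : S × A, muS P π γ η s₀ y * (P y s).toReal) := by
        rw [aux_tail P π hγ hη0 hη1 s₀ s a]
        rfl

end s3


theorem stmt6 {S A : Type*} [Fintype S] [Fintype A] [Nonempty S] [Nonempty A]
    (P : S × A → PMF S) (π : S → PMF A) (γ : ℝ) (hγ : γ ∈ Set.Ioo (0 : ℝ) 1)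
    (η : ℕ → ℝ) (hη0 : ∀ k, 0 ≤ η k) (hη1 : ∑' k, η k = 1) :
    -- flow equation of `μ_π` in the `γ` direction
    (∀ (s₀ s : S) (a : A),
      muS P π γ η s₀ (s, a) =
        (π s a).toReal * ((∑ a' : A, PetaS P π η s₀ (s, a')) +
          γ * ∑ y : S × A, muS P π γ η s₀ y * (P y s).toReal)) ∧
    -- flow equation of `μ_π` in the `γ_η` direction, for geometric `η`
    (∀ γη : ℝ, γη ∈ Set.Ioo (0 : ℝ) 1 → (∀ k, η k = (1 - γη) * γη ^ k) →
      ∀ (s₀ s : S) (a : A),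
        muS P π γ η s₀ (s, a) =
          (π s a).toReal * ((1 - γη) * (∑ a' : A, rhoS P π γ s₀ (s, a')) +
            γη * ∑ y : S × A, muS P π γ η s₀ y * (P y s).toReal)) := by
  constructor
  · intro s₀ s a
    rw [aux_flow1 P π hγ hη0 hη1 s₀ s a, aux_peta_fac P π hγ hη0 hη1 s₀ s a]
    ring
  · intro γη hγη hgeo s₀ s a
    rw [aux_flow2 P π hγ hη0 hη1 s₀ hγη hgeo s a, aux_rho_fac P π hγ hη0 hη1 s₀ s a]
    ring
end

section
/- (Strict concavity of the conditional-entropy functional with respect to occupancy measures.) Let S and A be nonempty finite types. For a strictly positive function μ : S × A → ℝ define H̄(μ) = −∑_{(s,a)} μ(s,a) · Real.log( μ(s,a) / ∑_{a'} μ(s,a') ). Then for all strictly positive μ₁, μ₂ : S × A → ℝ and every λ ∈ (0,1): H̄(λ•μ₁ + (1−λ)•μ₂) ≥ λ·H̄(μ₁) + (1−λ)·H̄(μ₂), with equality if and only if for all s, a: μ₁(s,a)/∑_{a'} μ₁(s,a') = μ₂(s,a)/∑_{a'} μ₂(s,a'). -/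
open scoped BigOperators

lemma key12 (a b c d : ℝ) (ha : 0 < a) (hb : 0 < b) (hc : 0 < c) (hd : 0 < d) :
    (a + c) * Real.log ((a + c) / (b + d)) ≤ a * Real.log (a / b) + c * Real.log (c / d) ∧
    ((a + c) * Real.log ((a + c) / (b + d)) = a * Real.log (a / b) + c * Real.log (c / d) ↔
      a / b = c / d) := by
  have hbd : 0 < b + d := by linarith
  by_cases h : a / b = c / d
  · have had : a * d = c * b := by
      field_simp at h; linarith
    have hr : (a + c) / (b + d) = a / b := by
      field_simp; ring_nf; nlinarith
    have hr2 : c / d = a / b := h.symm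
    constructor
    · rw [hr, hr2]; ring_nf; exact le_of_eq rfl
    · constructor
      · intro _; exact h
      · intro _; rw [hr, hr2]; ring
  · have hsc := Real.strictConvexOn_mul_log
    have hx : (a / b) ∈ Set.Ici (0:ℝ) := le_of_lt (div_pos ha hb)
    have hy : (c / d) ∈ Set.Ici (0:ℝ) := le_of_lt (div_pos hc hd)
    have ht : (0:ℝ) < b / (b + d) := div_pos hb hbd
    have hu : (0:ℝ) < d / (b + d) := div_pos hd hbd
    have htu : b / (b + d) + d / (b + d) = 1 := by field_simp
    have hlt := hsc.2 hx hy h ht hu htu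
    simp only [smul_eq_mul] at hlt
    have hcomb : b / (b + d) * (a / b) + d / (b + d) * (c / d) = (a + c) / (b + d) := by
      field_simp
    rw [hcomb] at hlt
    have hmul := mul_lt_mul_of_pos_left hlt hbd
    have e1 : (b + d) * ((a + c) / (b + d) * Real.log ((a + c) / (b + d)))
        = (a + c) * Real.log ((a + c) / (b + d)) := by
      field_simp
    have e2 : (b + d) * (b / (b + d) * (a / b * Real.log (a / b)) +
        d / (b + d) * (c / d * Real.log (c / d)))
        = a * Real.log (a / b) + c * Real.log (c / d) := by
      field_simp
    rw [e1, e2] at hmul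
    exact ⟨le_of_lt hmul, ⟨fun he => absurd he (ne_of_lt hmul), fun he => absurd he h⟩⟩

/-- Conditional-entropy functional of a positive measure on state–action pairs. -/
noncomputable def Hbar {S A : Type*} [Fintype S] [Fintype A] (μ : S × A → ℝ) : ℝ :=
  -∑ x : S × A, μ x * Real.log (μ x / ∑ a' : A, μ (x.1, a'))

theorem stmt12 {S A : Type*} [Fintype S] [Fintype A] [Nonempty S] [Nonempty A]
    (μ₁ μ₂ : S × A → ℝ) (h₁ : ∀ x, 0 < μ₁ x) (h₂ : ∀ x, 0 < μ₂ x)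
    (l : ℝ) (hl : l ∈ Set.Ioo (0 : ℝ) 1) :
    Hbar (fun x => l * μ₁ x + (1 - l) * μ₂ x) ≥ l * Hbar μ₁ + (1 - l) * Hbar μ₂ ∧
    (Hbar (fun x => l * μ₁ x + (1 - l) * μ₂ x) = l * Hbar μ₁ + (1 - l) * Hbar μ₂ ↔
      ∀ (s : S) (a : A),
        μ₁ (s, a) / (∑ a' : A, μ₁ (s, a')) = μ₂ (s, a) / ∑ a' : A, μ₂ (s, a')) := by
  obtain ⟨hl0, hl1⟩ := hl
  have hl1' : 0 < 1 - l := by linarith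
  -- sums over actions
  set S₁ : S → ℝ := fun s => ∑ a' : A, μ₁ (s, a') with hS₁
  set S₂ : S → ℝ := fun s => ∑ a' : A, μ₂ (s, a') with hS₂
  have hS₁pos : ∀ s, 0 < S₁ s := fun s =>
    Finset.sum_pos (fun a _ => h₁ (s, a)) Finset.univ_nonempty
  have hS₂pos : ∀ s, 0 < S₂ s := fun s =>
    Finset.sum_pos (fun a _ => h₂ (s, a)) Finset.univ_nonempty
  -- per-point quantities
  set ν : S × A → ℝ := fun x => l * μ₁ x + (1 - l) * μ₂ x with hν
  have hSν : ∀ s : S, (∑ a' : A, ν (s, a')) = l * S₁ s + (1 - l) * S₂ s := by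
    intro s
    simp only [hν, hS₁, hS₂, Finset.sum_add_distrib, Finset.mul_sum]
  set g : S × A → ℝ := fun x => ν x * Real.log (ν x / ∑ a' : A, ν (x.1, a')) with hg
  set g₁ : S × A → ℝ := fun x => l * (μ₁ x * Real.log (μ₁ x / S₁ x.1)) with hg₁
  set g₂ : S × A → ℝ := fun x => (1 - l) * (μ₂ x * Real.log (μ₂ x / S₂ x.1)) with hg₂
  -- rewrite each summand in the form of key12
  have hform : ∀ x : S × A,
      g x = (l * μ₁ x + (1 - l) * μ₂ x) *
        Real.log ((l * μ₁ x + (1 - l) * μ₂ x) / (l * S₁ x.1 + (1 - l) * S₂ x.1)) ∧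
      g₁ x = (l * μ₁ x) * Real.log (μ₁ x / S₁ x.1) ∧
      g₂ x = ((1 - l) * μ₂ x) * Real.log (μ₂ x / S₂ x.1) := by
    intro x
    refine ⟨?_, ?_, ?_⟩
    · simp only [hg, hν, hSν x.1, hS₁, hS₂, Finset.sum_add_distrib, Finset.mul_sum]
    · simp only [hg₁]; ring
    · simp only [hg₂]; ring
  have hkey : ∀ x : S × A,
      g x ≤ g₁ x + g₂ x ∧ (g x = g₁ x + g₂ x ↔ μ₁ x / S₁ x.1 = μ₂ x / S₂ x.1) := by
    intro x
    obtain ⟨e0, e1, e2⟩ := hform x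
    have h := key12 (l * μ₁ x) (l * S₁ x.1) ((1 - l) * μ₂ x) ((1 - l) * S₂ x.1)
      (mul_pos hl0 (h₁ x)) (mul_pos hl0 (hS₁pos x.1))
      (mul_pos hl1' (h₂ x)) (mul_pos hl1' (hS₂pos x.1))
    rw [mul_div_mul_left _ _ (ne_of_gt hl0), mul_div_mul_left _ _ (ne_of_gt hl1')] at h
    rw [e0, e1, e2]
    exact h
  have hsum_le : ∑ x : S × A, g x ≤ ∑ x : S × A, (g₁ x + g₂ x) :=
    Finset.sum_le_sum (fun x _ => (hkey x).1)
  have hHν : Hbar ν = -∑ x : S × A, g x := rfl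
  have hH12 : l * Hbar μ₁ + (1 - l) * Hbar μ₂ = -∑ x : S × A, (g₁ x + g₂ x) := by
    have e1 : l * Hbar μ₁ = -∑ x : S × A, g₁ x := by
      simp only [Hbar, hg₁, hS₁, Finset.mul_sum, mul_neg]
    have e2 : (1 - l) * Hbar μ₂ = -∑ x : S × A, g₂ x := by
      simp only [Hbar, hg₂, hS₂, Finset.mul_sum, mul_neg]
    rw [e1, e2, Finset.sum_add_distrib, neg_add]
  constructor
  · rw [ge_iff_le, hH12, hHν]
    exact neg_le_neg hsum_le
  · rw [hH12, hHν, neg_inj]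
    rw [Finset.sum_eq_sum_iff_of_le (fun x _ => (hkey x).1)]
    constructor
    · intro h s a
      exact ((hkey (s, a)).2).1 (h (s, a) (Finset.mem_univ _))
    · intro h x _
      exact ((hkey x).2).2 (h x.1 x.2)
end

section
/- (MEGAN change of variables: the GAN-penalised cost optimisation equals a discriminator optimisation.) Let X be a nonempty finite type and let a, b : X → ℝ be nonnegative. Define g : ℝ → ℝ on negative arguments by g(x) = −x − Real.log(1 − Real.exp x). Then the supremum over all c : X → ℝ with c(x) < 0 for all x of ∑_x [ (a(x) − b(x))·c(x) − b(x)·g(c(x)) ] equals the supremum over all D : X → ℝ with 0 < D(x) < 1 for all x of ∑_x [ a(x)·Real.log(D(x)) + b(x)·Real.log(1 − D(x)) ]. -/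
open scoped BigOperators

/-- The GAN penalty `g(x) = −x − log(1 − eˣ)` (meaningful for `x < 0`). -/
noncomputable def ganPenalty (x : ℝ) : ℝ := -x - Real.log (1 - Real.exp x)

theorem stmt15 {X : Type*} [Fintype X] [Nonempty X]
    (a b : X → ℝ) (ha : ∀ x, 0 ≤ a x) (hb : ∀ x, 0 ≤ b x) :
    sSup { r : ℝ | ∃ c : X → ℝ, (∀ x, c x < 0) ∧
        r = ∑ x : X, ((a x - b x) * c x - b x * ganPenalty (c x)) } =
    sSup { r : ℝ | ∃ D : X → ℝ, (∀ x, 0 < D x ∧ D x < 1) ∧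
        r = ∑ x : X, (a x * Real.log (D x) + b x * Real.log (1 - D x)) } := by
  congr 1
  ext r
  constructor
  · rintro ⟨c, hc, rfl⟩
    refine ⟨fun x => Real.exp (c x), fun x => ⟨Real.exp_pos _, Real.exp_lt_one_iff.mpr (hc x)⟩, ?_⟩
    refine Finset.sum_congr rfl fun x _ => ?_
    rw [Real.log_exp]
    unfold ganPenalty
    ring
  · rintro ⟨D, hD, rfl⟩
    refine ⟨fun x => Real.log (D x), fun x => Real.log_neg (hD x).1 (hD x).2, ?_⟩
    refine Finset.sum_congr rfl fun x _ => ?_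
    rw [ganPenalty, Real.exp_log (hD x).1]
    ring
end

section
/- (Optimal discriminator and Jensen–Shannon divergence value of the GAN objective.) Let X be a nonempty finite type and let p, q : X → ℝ be strictly positive with ∑_x p(x) = 1 and ∑_x q(x) = 1. Then the supremum over all D : X → ℝ with 0 < D(x) < 1 of ∑_x [ p(x)·Real.log(D(x)) + q(x)·Real.log(1 − D(x)) ] is attained at D*(x) = p(x)/(p(x)+q(x)) and equals 2·JSD(p,q) − Real.log 4, where JSD(p,q) = (1/2)·∑_x p(x)·Real.log( 2·p(x)/(p(x)+q(x)) ) + (1/2)·∑_x q(x)·Real.log( 2·q(x)/(p(x)+q(x)) ). -/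
open scoped BigOperators

lemma aux16 (a b D : ℝ) (ha : 0 < a) (hb : 0 < b) (hD0 : 0 < D) (hD1 : D < 1) :
    a * Real.log D + b * Real.log (1 - D) ≤
      a * Real.log (a / (a + b)) + b * Real.log (b / (a + b)) := by
  have hs : 0 < a + b := by linarith
  have hD1' : 0 < 1 - D := by linarith
  have e1 : D * (a + b) / a = D / (a / (a + b)) := by field_simp
  have e2 : (1 - D) * (a + b) / b = (1 - D) / (b / (a + b)) := by field_simp
  have k1 : Real.log (D / (a / (a + b))) ≤ D * (a + b) / a - 1 := by
    rw [← e1]; exact Real.log_le_sub_one_of_pos (by positivity)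
  have k2 : Real.log ((1 - D) / (b / (a + b))) ≤ (1 - D) * (a + b) / b - 1 := by
    rw [← e2]; exact Real.log_le_sub_one_of_pos (by positivity)
  rw [Real.log_div hD0.ne' (by positivity)] at k1
  rw [Real.log_div hD1'.ne' (by positivity)] at k2
  have m1 := mul_le_mul_of_nonneg_left k1 ha.le
  have m2 := mul_le_mul_of_nonneg_left k2 hb.le
  have r1 : a * (D * (a + b) / a - 1) = D * (a + b) - a := by field_simp
  have r2 : b * ((1 - D) * (a + b) / b - 1) = (1 - D) * (a + b) - b := by field_simp
  rw [r1] at m1; rw [r2] at m2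
  nlinarith [m1, m2]

theorem stmt16 {X : Type*} [Fintype X] [Nonempty X]
    (p q : X → ℝ) (hp : ∀ x, 0 < p x) (hq : ∀ x, 0 < q x)
    (hp1 : ∑ x : X, p x = 1) (hq1 : ∑ x : X, q x = 1) :
    -- the optimal discriminator
    let Dstar : X → ℝ := fun x => p x / (p x + q x)
    -- the Jensen–Shannon divergence between `p` and `q`
    let JSD : ℝ :=
      (1 / 2) * ∑ x : X, p x * Real.log (2 * p x / (p x + q x)) +
      (1 / 2) * ∑ x : X, q x * Real.log (2 * q x / (p x + q x))
    -- `Dstar` is admissible and attains the supremum of the GAN objective,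
    -- whose value is `2·JSD(p,q) − log 4`
    (∀ x, 0 < Dstar x ∧ Dstar x < 1) ∧
    IsGreatest
      { r : ℝ | ∃ D : X → ℝ, (∀ x, 0 < D x ∧ D x < 1) ∧
          r = ∑ x : X, (p x * Real.log (D x) + q x * Real.log (1 - D x)) }
      (∑ x : X, (p x * Real.log (Dstar x) + q x * Real.log (1 - Dstar x))) ∧
    (∑ x : X, (p x * Real.log (Dstar x) + q x * Real.log (1 - Dstar x))) =
      2 * JSD - Real.log 4 := by
  intro Dstar JSD
  have hs : ∀ x, 0 < p x + q x := fun x => by have := hp x; have := hq x; linarith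
  have hadm : ∀ x, 0 < Dstar x ∧ Dstar x < 1 := by
    intro x
    constructor
    · exact div_pos (hp x) (hs x)
    · rw [div_lt_one (hs x)]; linarith [hq x]
  have h1D : ∀ x, 1 - Dstar x = q x / (p x + q x) := by
    intro x; have := (hs x).ne'; show 1 - p x / (p x + q x) = q x / (p x + q x)
    rw [eq_div_iff this, sub_mul, div_mul_cancel₀ _ this]; ring
  refine ⟨hadm, ⟨⟨Dstar, hadm, rfl⟩, ?_⟩, ?_⟩
  · rintro r ⟨D, hD, rfl⟩
    apply Finset.sum_le_sum
    intro x _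
    rw [h1D x]
    exact aux16 (p x) (q x) (D x) (hp x) (hq x) (hD x).1 (hD x).2
  · have hlog4 : Real.log 4 = 2 * Real.log 2 := by
      rw [show (4:ℝ) = 2 * 2 by norm_num, Real.log_mul (by norm_num) (by norm_num)]; ring
    have e1 : ∀ x : X, p x * Real.log (2 * p x / (p x + q x)) =
        p x * Real.log (p x / (p x + q x)) + p x * Real.log 2 := by
      intro x
      rw [show 2 * p x / (p x + q x) = 2 * (p x / (p x + q x)) by ring,
        Real.log_mul (by norm_num) (ne_of_gt (div_pos (hp x) (hs x)))]
      ring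
    have e2 : ∀ x : X, q x * Real.log (2 * q x / (p x + q x)) =
        q x * Real.log (q x / (p x + q x)) + q x * Real.log 2 := by
      intro x
      rw [show 2 * q x / (p x + q x) = 2 * (q x / (p x + q x)) by ring,
        Real.log_mul (by norm_num) (ne_of_gt (div_pos (hq x) (hs x)))]
      ring
    have E : JSD = (1/2) * ∑ x : X, (p x * Real.log (p x / (p x + q x)) + p x * Real.log 2)
        + (1/2) * ∑ x : X, (q x * Real.log (q x / (p x + q x)) + q x * Real.log 2) := by
      simp only [JSD]
      rw [Finset.sum_congr rfl (fun x _ => e1 x), Finset.sum_congr rfl (fun x _ => e2 x)]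
    rw [Finset.sum_congr rfl (fun x _ => by rw [h1D x]), E, hlog4]
    simp only [Finset.sum_add_distrib, ← Finset.sum_mul, hp1, hq1]
    simp only [Dstar]
    ring
end

section
/- (Idle: (D ≡ 1/2, G = P) is a Nash equilibrium of the future-state generation game.) Let X be a nonempty finite type and let p : X → ℝ be a strictly positive probability mass function (p(x) > 0, ∑_x p(x) = 1). For D : X → ℝ with 0 < D(x) < 1 and a probability mass function G : X → ℝ (G(x) ≥ 0, ∑_x G(x) = 1), define V(D,G) = ∑_x p(x)·Real.log(D(x)) + ∑_x G(x)·Real.log(1 − D(x)). Then: (i) for every admissible D, V(D, p) ≤ V(fun _ => 1/2, p) = −Real.log 4; (ii) for every probability mass function G, V(fun _ => 1/2, G) = −Real.log 4; hence no unilateral deviation of the discriminator from D ≡ 1/2, nor of the generator from G = p, improves its objective. -/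
open scoped BigOperators

/-- The value function of the Idle future-state generation game. -/
noncomputable def idleV {X : Type*} [Fintype X] (p D G : X → ℝ) : ℝ :=
  ∑ x : X, p x * Real.log (D x) + ∑ x : X, G x * Real.log (1 - D x)

theorem stmt17 {X : Type*} [Fintype X] [Nonempty X]
    (p : X → ℝ) (hp : ∀ x, 0 < p x) (hp1 : ∑ x : X, p x = 1) :
    -- (i) the constant discriminator `1/2` is a best response to the generator `p`
    (∀ D : X → ℝ, (∀ x, 0 < D x ∧ D x < 1) →
      idleV p D p ≤ idleV p (fun _ => 1 / 2) p) ∧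
    idleV p (fun _ => 1 / 2) p = -Real.log 4 ∧
    -- (ii) against the constant discriminator `1/2`, every generator gets the same value
    (∀ G : X → ℝ, (∀ x, 0 ≤ G x) → ∑ x : X, G x = 1 →
      idleV p (fun _ => 1 / 2) G = -Real.log 4) := by
  have hhalf : ∀ G : X → ℝ, ∑ x : X, G x = 1 →
      idleV p (fun _ => 1 / 2) G = -Real.log 4 := by
    intro G hG
    have h12 : (1 : ℝ) - 1 / 2 = 1 / 2 := by norm_num
    simp only [idleV, h12]
    rw [← Finset.sum_mul, ← Finset.sum_mul, hp1, hG]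
    have : Real.log (1 / 2) = -Real.log 2 := by
      rw [Real.log_div one_ne_zero two_ne_zero, Real.log_one]; ring
    rw [this]
    have h4 : (4 : ℝ) = 2 ^ 2 := by norm_num
    rw [h4, Real.log_pow]
    push_cast; ring
  refine ⟨?_, hhalf p hp1, fun G _ hG => hhalf G hG⟩
  intro D hD
  rw [hhalf p hp1]
  have key : ∀ x : X, p x * Real.log (D x) + p x * Real.log (1 - D x)
      ≤ p x * (-Real.log 4) := by
    intro x
    obtain ⟨h0, h1⟩ := hD x
    have h1' : 0 < 1 - D x := by linarith
    rw [← mul_add, ← Real.log_mul (ne_of_gt h0) (ne_of_gt h1')]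
    have hle : D x * (1 - D x) ≤ 1 / 4 := by nlinarith [sq_nonneg (D x - 1/2)]
    have hlog : Real.log (D x * (1 - D x)) ≤ Real.log (1 / 4) :=
      Real.log_le_log (by positivity) hle
    have : Real.log (1 / 4) = -Real.log 4 := by
      rw [Real.log_div one_ne_zero (by norm_num), Real.log_one]; ring
    rw [this] at hlog
    exact mul_le_mul_of_nonneg_left hlog (hp x).le
  calc idleV p D p = ∑ x : X, (p x * Real.log (D x) + p x * Real.log (1 - D x)) := by
        rw [idleV, Finset.sum_add_distrib]
    _ ≤ ∑ x : X, p x * (-Real.log 4) := Finset.sum_le_sum fun x _ => key x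
    _ = -Real.log 4 := by rw [← Finset.sum_mul, hp1, one_mul]
end
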